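/- Fix a partition 0 = t_0 < t_1 < ⋯ < t_N = 1 of [0,1]; for an integrable function g on (0,1) let P_h g be the piecewise constant function whose value on the i-th subinterval (t_{i−1}, t_i) is the mean m_i(g) = (t_i − t_{i−1})^{−1} ∫_{t_{i−1}}^{t_i} g. Let u : ℝ → ℝ be continuously differentiable on [0,1] with u(0) = u(1) = 0, and let w : (0,1) → ℝ be measurable with |w(x)| ≤ M for almost every x ∈ (0,1), where M ≥ 0. Then ∫_0^1 u′(x)² dx + ∫_0^1 (P_h w)(x) (P_h u)(x) u(x) dx ≥ (1 − M/π²) ∫_0^1 u′(x)² dx. -/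

import Mathlib

open MeasureTheory Real

/-- The mean value of `g` over the `j`-th subinterval `(t (j-1), t j)`. -/
noncomputable def cellMean (t : ℕ → ℝ) (j : ℕ) (g : ℝ → ℝ) : ℝ :=
  (t j - t (j - 1))⁻¹ * ∫ x in (t (j - 1))..(t j), g x

/-- The piecewise constant local average of `g` on the partition
`0 = t 0 < t 1 < ⋯ < t N = 1`. -/
noncomputable def locAvg (t : ℕ → ℝ) (N : ℕ) (g : ℝ → ℝ) : ℝ → ℝ :=
  fun x => ∑ j ∈ Finset.Icc 1 N,
    Set.indicator (Set.Ioc (t (j - 1)) (t j)) (fun _ => cellMean t j g) x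


lemma cs_interval (a b : ℝ) (hab : a < b) (f : ℝ → ℝ)
    (hf : ContinuousOn f (Set.Icc a b)) :
    (∫ x in a..b, f x) ^ 2 ≤ (b - a) * ∫ x in a..b, f x ^ 2 := by
  have hab' : a ≤ b := hab.le
  have hf2 : ContinuousOn (fun x => f x ^ 2) (Set.Icc a b) := hf.pow 2
  have hif : IntervalIntegrable f volume a b :=
    (hf.mono (by rw [Set.uIcc_of_le hab'])).intervalIntegrable
  have hif2 : IntervalIntegrable (fun x => f x ^ 2) volume a b :=
    (hf2.mono (by rw [Set.uIcc_of_le hab'])).intervalIntegrable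
  set I := ∫ x in a..b, f x with hI
  set m := I / (b - a) with hm
  have h0 : (0:ℝ) ≤ ∫ x in a..b, (f x - m) ^ 2 :=
    intervalIntegral.integral_nonneg hab' (fun x _ => sq_nonneg _)
  have hexp : ∫ x in a..b, (f x - m) ^ 2
      = (∫ x in a..b, f x ^ 2) - 2 * m * I + m ^ 2 * (b - a) := by
    have : ∀ x, (f x - m) ^ 2 = f x ^ 2 - (2 * m) * f x + m ^ 2 := by intro x; ring
    simp_rw [this]
    rw [intervalIntegral.integral_add ((hif2.sub (hif.const_mul _))) intervalIntegrable_const,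
      intervalIntegral.integral_sub hif2 (hif.const_mul _),
      intervalIntegral.integral_const_mul, intervalIntegral.integral_const]
    simp [smul_eq_mul]; ring
  rw [hexp] at h0
  have hb : 0 < b - a := by linarith
  have hmI : m * (b - a) = I := by rw [hm, div_mul_cancel₀ _ hb.ne']
  nlinarith [sq_nonneg m, sq_nonneg I]


set_option maxHeartbeats 1000000 in
lemma poincare (u u' : ℝ → ℝ)
    (hu : ∀ x ∈ Set.Icc (0:ℝ) 1, HasDerivAt u (u' x) x)
    (hu'c : ContinuousOn u' (Set.Icc 0 1))
    (hu0 : u 0 = 0) (hu1 : u 1 = 0) :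
    π ^ 2 * ∫ x in (0:ℝ)..1, u x ^ 2 ≤ ∫ x in (0:ℝ)..1, u' x ^ 2 := by
  have huc : ContinuousOn u (Set.Icc 0 1) :=
    fun x hx => (hu x hx).continuousAt.continuousWithinAt
  obtain ⟨C, hC⟩ := (isCompact_Icc : IsCompact (Set.Icc (0:ℝ) 1)).exists_bound_of_continuousOn hu'c
  have hC0 : 0 ≤ C := le_trans (norm_nonneg _) (hC 0 (by norm_num))
  have hlip : ∀ x ∈ Set.Icc (0:ℝ) 1, ∀ y ∈ Set.Icc (0:ℝ) 1, ‖u y - u x‖ ≤ C * ‖y - x‖ := by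
    intro x hx y hy
    exact (convex_Icc (0:ℝ) 1).norm_image_sub_le_of_norm_hasDerivWithin_le
      (fun z hz => (hu z hz).hasDerivWithinAt) hC hx hy
  have hux : ∀ x ∈ Set.Icc (0:ℝ) 1, |u x| ≤ C * x := by
    intro x hx
    have := hlip 0 (by norm_num) x hx
    simpa [hu0, abs_of_nonneg hx.1] using this
  have hux1 : ∀ x ∈ Set.Icc (0:ℝ) 1, |u x| ≤ C * (1 - x) := by
    intro x hx
    have h := hlip 1 (by norm_num) x hx
    rw [hu1, sub_zero, Real.norm_eq_abs, Real.norm_eq_abs, abs_sub_comm x 1] at h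
    rwa [abs_of_nonneg (show (0:ℝ) ≤ 1 - x by linarith [hx.2])] at h
  set c : ℝ → ℝ := fun x => π * Real.cos (π * x) / Real.sin (π * x) with hc
  set g : ℝ → ℝ := fun x => u' x ^ 2 - π ^ 2 * u x ^ 2 with hg
  have hgc : ContinuousOn g (Set.Icc 0 1) :=
    (hu'c.pow 2).sub (continuousOn_const.mul (huc.pow 2))
  set K : ℝ := C ^ 2 + π ^ 2 * C ^ 2 with hK
  have hK0 : 0 ≤ K := by positivity
  have hgbound : ∀ x ∈ Set.Icc (0:ℝ) 1, ‖g x‖ ≤ K := by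
    intro x hx
    have h1 : |u' x| ≤ C := hC x hx
    have h2 : |u x| ≤ C := le_trans (hux x hx) (by nlinarith [hx.2])
    have h3 : u' x ^ 2 ≤ C ^ 2 := by rw [← sq_abs]; exact pow_le_pow_left₀ (abs_nonneg _) h1 2
    have h4 : u x ^ 2 ≤ C ^ 2 := by rw [← sq_abs]; exact pow_le_pow_left₀ (abs_nonneg _) h2 2
    have h5 : π ^ 2 * u x ^ 2 ≤ π ^ 2 * C ^ 2 := by nlinarith [sq_nonneg π]
    rw [Real.norm_eq_abs]
    calc |u' x ^ 2 - π ^ 2 * u x ^ 2| ≤ |u' x ^2| + |π ^2 * u x ^2| := abs_sub _ _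
      _ ≤ K := by
          rw [abs_of_nonneg (sq_nonneg _), abs_of_nonneg (by positivity)]
          linarith
  have main : ∀ ε : ℝ, 0 < ε → ε < 1/2 →
      -(2 * C ^ 2 * ε) ≤ ∫ x in ε..(1-ε), g x := by
    intro ε hε hε2
    have hab : ε < 1 - ε := by linarith
    have hsub : Set.Icc ε (1-ε) ⊆ Set.Ioo (0:ℝ) 1 := fun x hx => ⟨by linarith [hx.1], by linarith [hx.2]⟩
    have hsub01 : Set.Icc ε (1-ε) ⊆ Set.Icc (0:ℝ) 1 := hsub.trans Set.Ioo_subset_Icc_self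
    have hsin : ∀ x ∈ Set.Icc ε (1-ε), 0 < Real.sin (π * x) := by
      intro x hx
      obtain ⟨h1, h2⟩ := hsub hx
      exact Real.sin_pos_of_pos_of_lt_pi (by positivity) (by nlinarith [Real.pi_pos])
    set F : ℝ → ℝ := fun x => c x * u x ^ 2 with hF
    set Fd : ℝ → ℝ := fun x => -(π^2) / Real.sin (π * x) ^ 2 * u x ^ 2 + c x * (2 * u x * u' x) with hFd
    have hderivF : ∀ x ∈ Set.Icc ε (1-ε), HasDerivAt F (Fd x) x := by
      intro x hx
      have hs := hsin x hx
      have hsne : Real.sin (π * x) ≠ 0 := hs.ne'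
      have h1 : HasDerivAt (fun y : ℝ => π * y) π x := by
        simpa using (hasDerivAt_id x).const_mul π
      have hsinD : HasDerivAt (fun y => Real.sin (π * y)) (Real.cos (π * x) * π) x := h1.sin
      have hcosD : HasDerivAt (fun y => π * Real.cos (π * y)) (π * (-Real.sin (π * x) * π)) x :=
        (h1.cos).const_mul π
      have hcD : HasDerivAt c ((π * (-Real.sin (π * x) * π) * Real.sin (π * x) -
          π * Real.cos (π * x) * (Real.cos (π * x) * π)) / Real.sin (π * x) ^ 2) x :=
        hcosD.div hsinD hsne
      have hnum : π * (-Real.sin (π * x) * π) * Real.sin (π * x) -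
          π * Real.cos (π * x) * (Real.cos (π * x) * π) = -(π^2) := by
        linear_combination (-(π^2)) * (Real.sin_sq_add_cos_sq (π * x))
      rw [hnum] at hcD
      have huD : HasDerivAt (fun y => u y ^ 2) (2 * u x * u' x) x := by
        have := (hu x (hsub01 hx)).pow 2
        exact this.congr_deriv (by ring)
      exact hcD.mul huD
    have hcCont : ContinuousOn c (Set.Icc ε (1-ε)) := by
      apply ContinuousOn.div
      · exact (continuous_const.mul (Real.continuous_cos.comp (continuous_const.mul continuous_id))).continuousOn
      · exact (Real.continuous_sin.comp (continuous_const.mul continuous_id)).continuousOn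
      · exact fun x hx => (hsin x hx).ne'
    have hucab : ContinuousOn u (Set.Icc ε (1-ε)) := huc.mono hsub01
    have hu'cab : ContinuousOn u' (Set.Icc ε (1-ε)) := hu'c.mono hsub01
    have hFdCont : ContinuousOn Fd (Set.Icc ε (1-ε)) := by
      apply ContinuousOn.add
      · apply ContinuousOn.mul _ (hucab.pow 2)
        apply ContinuousOn.div continuousOn_const
        · exact ((Real.continuous_sin.comp (continuous_const.mul continuous_id)).pow 2).continuousOn
        · exact fun x hx => pow_ne_zero _ (hsin x hx).ne'
      · exact hcCont.mul ((continuousOn_const.mul hucab).mul hu'cab)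
    have hFdInt : IntervalIntegrable Fd volume ε (1-ε) :=
      (hFdCont.mono (by rw [Set.uIcc_of_le hab.le])).intervalIntegrable
    have hFTC : ∫ x in ε..(1-ε), Fd x = F (1-ε) - F ε :=
      intervalIntegral.integral_eq_sub_of_hasDerivAt
        (fun x hx => hderivF x (by rwa [Set.uIcc_of_le hab.le] at hx)) hFdInt
    have hident : Set.EqOn g (fun x => (u' x - c x * u x) ^ 2 + Fd x) (Set.uIcc ε (1-ε)) := by
      intro x hx
      rw [Set.uIcc_of_le hab.le] at hx
      have hs := hsin x hx
      have hsne : Real.sin (π * x) ≠ 0 := hs.ne'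
      have hcos : Real.cos (π * x) ^ 2 = 1 - Real.sin (π * x) ^ 2 := Real.cos_sq' _
      simp only [hg, hFd, hc]
      linear_combination (-(π ^ 2) * u x ^ 2 * (Real.sin (π * x))⁻¹ ^ 2) * hcos + (π ^ 2 * u x ^ 2 * (Real.sin (π * x) * (Real.sin (π * x))⁻¹ + 1)) * mul_inv_cancel₀ hsne
    have hsqCont : ContinuousOn (fun x => (u' x - c x * u x) ^ 2) (Set.Icc ε (1-ε)) :=
      ((hu'cab.sub (hcCont.mul hucab)).pow 2)
    have hsqInt : IntervalIntegrable (fun x => (u' x - c x * u x) ^ 2) volume ε (1-ε) :=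
      (hsqCont.mono (by rw [Set.uIcc_of_le hab.le])).intervalIntegrable
    have hsplit : ∫ x in ε..(1-ε), g x
        = (∫ x in ε..(1-ε), (u' x - c x * u x) ^ 2) + ∫ x in ε..(1-ε), Fd x := by
      rw [intervalIntegral.integral_congr hident,
        intervalIntegral.integral_add hsqInt hFdInt]
    have hnn : 0 ≤ ∫ x in ε..(1-ε), (u' x - c x * u x) ^ 2 :=
      intervalIntegral.integral_nonneg hab.le (fun x _ => sq_nonneg _)
    have hεπ : π * ε < π / 2 := by nlinarith [Real.pi_pos]
    have hεπ0 : 0 < π * ε := by positivity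
    have htan : π * ε < Real.tan (π * ε) := Real.lt_tan hεπ0 hεπ
    have hsinε : 0 < Real.sin (π * ε) := Real.sin_pos_of_pos_of_lt_pi hεπ0 (by nlinarith [Real.pi_pos])
    have hcosε : 0 < Real.cos (π * ε) := Real.cos_pos_of_mem_Ioo ⟨by nlinarith [Real.pi_pos], hεπ⟩
    have hcot : π * Real.cos (π * ε) / Real.sin (π * ε) ≤ 1 / ε := by
      rw [div_le_div_iff₀ hsinε hε]
      have h2 : (π * ε) * Real.cos (π * ε) ≤ Real.sin (π * ε) := by
        have h3 := mul_le_mul_of_nonneg_right htan.le hcosε.le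
        rwa [Real.tan_eq_sin_div_cos, div_mul_cancel₀ _ hcosε.ne'] at h3
      nlinarith [h2]
    have huε : |u ε| ≤ C * ε := hux ε ⟨hε.le, by linarith⟩
    have huε1 : |u (1-ε)| ≤ C * ε := by
      have := hux1 (1-ε) ⟨by linarith, by linarith⟩
      simpa using this
    have hFa : F ε ≤ C ^ 2 * ε := by
      have h1 : u ε ^ 2 ≤ (C * ε) ^ 2 := by
        rw [← sq_abs (u ε)]; exact pow_le_pow_left₀ (abs_nonneg _) huε 2
      calc F ε = c ε * u ε ^ 2 := rfl
        _ ≤ (1/ε) * (C * ε)^2 := by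
            apply mul_le_mul hcot h1 (sq_nonneg _) (by positivity)
        _ = C ^ 2 * ε := by field_simp [hε.ne']
    have hFb : -(C ^ 2 * ε) ≤ F (1-ε) := by
      have hcb : c (1-ε) = -(π * Real.cos (π * ε) / Real.sin (π * ε)) := by
        simp only [hc]
        have h1 : π * (1 - ε) = π - π * ε := by ring
        rw [h1, Real.cos_pi_sub, Real.sin_pi_sub]
        ring
      have h1 : u (1-ε) ^ 2 ≤ (C * ε) ^ 2 := by
        rw [← sq_abs (u (1-ε))]; exact pow_le_pow_left₀ (abs_nonneg _) huε1 2
      have hcb2 : -(1/ε) ≤ c (1-ε) := by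
        rw [hcb]; exact neg_le_neg hcot
      have hcbneg : c (1-ε) ≤ 0 := by
        rw [hcb]
        simp only [neg_nonpos]
        positivity
      have s1 : c (1-ε) * (C*ε)^2 ≤ c (1-ε) * u (1-ε)^2 := mul_le_mul_of_nonpos_left h1 hcbneg
      have s2 : -(1/ε) * (C*ε)^2 ≤ c (1-ε) * (C*ε)^2 := mul_le_mul_of_nonneg_right hcb2 (sq_nonneg _)
      have s3 : -(C^2 * ε) = -(1/ε) * (C*ε)^2 := by field_simp [hε.ne']
      calc -(C^2 * ε) = -(1/ε) * (C*ε)^2 := s3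
        _ ≤ c (1-ε) * u (1-ε) ^ 2 := le_trans s2 s1
        _ = F (1-ε) := rfl
    rw [hsplit, hFTC]
    linarith
  have hgInt : ∀ a b : ℝ, a ∈ Set.Icc (0:ℝ) 1 → b ∈ Set.Icc (0:ℝ) 1 →
      IntervalIntegrable g volume a b := by
    intro a b ha hb
    exact ((hgc.mono (Set.uIcc_subset_Icc ha hb))).intervalIntegrable
  have hglob : (0:ℝ) ≤ ∫ x in (0:ℝ)..1, g x := by
    by_contra hcon
    push_neg at hcon
    set δ := -(∫ x in (0:ℝ)..1, g x) with hδ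
    have hδ0 : 0 < δ := by simp only [hδ]; linarith
    set ε := min (1/4 : ℝ) (δ / (2*C^2 + 2*K + 1)) with hε
    have hεpos : 0 < ε := lt_min (by norm_num) (by positivity)
    have hεhalf : ε < 1/2 := lt_of_le_of_lt (min_le_left _ _) (by norm_num)
    have h1 : ε ∈ Set.Icc (0:ℝ) 1 := ⟨hεpos.le, by linarith⟩
    have h2 : (1-ε) ∈ Set.Icc (0:ℝ) 1 := ⟨by linarith, by linarith⟩
    have h0 : (0:ℝ) ∈ Set.Icc (0:ℝ) 1 := by norm_num
    have h3 : (1:ℝ) ∈ Set.Icc (0:ℝ) 1 := by norm_num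
    have hsplit2 : ∫ x in (0:ℝ)..1, g x =
        (∫ x in (0:ℝ)..ε, g x) + (∫ x in ε..(1-ε), g x) + ∫ x in (1-ε)..1, g x := by
      rw [intervalIntegral.integral_add_adjacent_intervals (hgInt 0 ε h0 h1) (hgInt ε (1-ε) h1 h2),
        intervalIntegral.integral_add_adjacent_intervals (hgInt 0 (1-ε) h0 h2) (hgInt (1-ε) 1 h2 h3)]
    have hb1 : ‖∫ x in (0:ℝ)..ε, g x‖ ≤ K * |ε - 0| := by
      apply intervalIntegral.norm_integral_le_of_norm_le_const
      intro x hx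
      rw [Set.uIoc_of_le hεpos.le] at hx
      exact hgbound x ⟨hx.1.le, le_trans hx.2 (by linarith)⟩
    have hb2 : ‖∫ x in (1-ε:ℝ)..1, g x‖ ≤ K * |1 - (1-ε)| := by
      apply intervalIntegral.norm_integral_le_of_norm_le_const
      intro x hx
      rw [Set.uIoc_of_le (by linarith : (1-ε:ℝ) ≤ 1)] at hx
      exact hgbound x ⟨by linarith [hx.1], hx.2⟩
    rw [sub_zero, abs_of_nonneg hεpos.le] at hb1
    have habs : |1 - (1-ε)| = ε := by rw [abs_of_nonneg (by linarith)]; ring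
    rw [habs] at hb2
    have hmain := main ε hεpos hεhalf
    have e1 : -(K*ε) ≤ ∫ x in (0:ℝ)..ε, g x := neg_le_of_abs_le hb1
    have e2 : -(K*ε) ≤ ∫ x in (1-ε:ℝ)..1, g x := neg_le_of_abs_le hb2
    have hεle : ε ≤ δ / (2*C^2 + 2*K + 1) := min_le_right _ _
    have hd : 0 < 2*C^2 + 2*K + 1 := by positivity
    have hlt : (2*C^2 + 2*K) * ε < δ := by
      calc (2*C^2 + 2*K) * ε ≤ (2*C^2 + 2*K) * (δ / (2*C^2 + 2*K + 1)) :=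
            mul_le_mul_of_nonneg_left hεle (by positivity)
        _ = δ * ((2*C^2 + 2*K) / (2*C^2 + 2*K + 1)) := by ring
        _ < δ * 1 := by
            apply mul_lt_mul_of_pos_left _ hδ0
            rw [div_lt_one hd]; linarith
        _ = δ := mul_one δ
    linarith [hsplit2, hmain, e1, e2, hlt]
  have huInt : IntervalIntegrable (fun x => u x ^ 2) volume 0 1 :=
    ((huc.pow 2).mono (by rw [Set.uIcc_of_le (by norm_num : (0:ℝ) ≤ 1)])).intervalIntegrable
  have hu'Int : IntervalIntegrable (fun x => u' x ^ 2) volume 0 1 :=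
    ((hu'c.pow 2).mono (by rw [Set.uIcc_of_le (by norm_num : (0:ℝ) ≤ 1)])).intervalIntegrable
  have hdiff : ∫ x in (0:ℝ)..1, g x
      = (∫ x in (0:ℝ)..1, u' x ^ 2) - π^2 * ∫ x in (0:ℝ)..1, u x ^ 2 := by
    simp only [hg]
    rw [intervalIntegral.integral_sub hu'Int (huInt.const_mul _),
      intervalIntegral.integral_const_mul]
  linarith [hglob, hdiff.le, hdiff.ge]

set_option maxHeartbeats 1000000 in
lemma locAvg_term_lower_bound
    (N : ℕ) (hN : 1 ≤ N) (t : ℕ → ℝ)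
    (ht0 : t 0 = 0) (htN : t N = 1) (hmono : ∀ i < N, t i < t (i + 1))
    (u : ℝ → ℝ)
    (huc : ContinuousOn u (Set.Icc 0 1))
    (M : ℝ) (hM : 0 ≤ M)
    (w : ℝ → ℝ) (hwm : Measurable w)
    (hwb : ∀ᵐ x ∂(volume.restrict (Set.Ioo (0:ℝ) 1)), |w x| ≤ M) :
    ∫ x in (0:ℝ)..1, locAvg t N w x * locAvg t N u x * u x ≥
      -(M * ∫ x in (0:ℝ)..1, u x ^ 2) := by
  have cs_interval : ∀ (a b : ℝ), a < b → ∀ f : ℝ → ℝ, ContinuousOn f (Set.Icc a b) →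
      (∫ x in a..b, f x) ^ 2 ≤ (b - a) * ∫ x in a..b, f x ^ 2 :=
    fun a b hab f hf => cs_interval a b hab f hf
  -- monotonicity of the partition
  have hle : ∀ i j : ℕ, i ≤ j → j ≤ N → t i ≤ t j := by
    intro i j hij hjN
    induction j with
    | zero => rw [Nat.le_zero.mp hij]
    | succ n ih =>
      rcases Nat.eq_or_lt_of_le hij with h | h
      · rw [h]
      · exact le_trans (ih (by omega) (by omega)) (hmono n (by omega)).le
  have h01 : ∀ i, i ≤ N → t i ∈ Set.Icc (0:ℝ) 1 :=
    fun i hi => ⟨ht0 ▸ hle 0 i (by omega) hi, htN ▸ hle i N hi le_rfl⟩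
  -- identification of locAvg on a cell
  have hcell : ∀ j, 1 ≤ j → j ≤ N → ∀ g : ℝ → ℝ,
      ∀ x ∈ Set.Ioc (t (j-1)) (t j), locAvg t N g x = cellMean t j g := by
    intro j hj1 hjN g x hx
    unfold locAvg
    rw [Finset.sum_eq_single j]
    · rw [Set.indicator_of_mem hx]
    · intro k hk hkj
      rw [Finset.mem_Icc] at hk
      apply Set.indicator_of_notMem
      intro hxk
      rcases lt_or_gt_of_ne hkj with h | h
      · have h1 : t k ≤ t (j-1) := hle k (j-1) (by omega) (by omega)
        have := hx.1
        have := hxk.2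
        linarith
      · have h1 : t j ≤ t (k-1) := hle j (k-1) (by omega) (by omega)
        have := hx.2
        have := hxk.1
        linarith
    · intro hj; exact absurd (Finset.mem_Icc.2 ⟨hj1, hjN⟩) hj
  set f : ℝ → ℝ := fun x => locAvg t N w x * locAvg t N u x * u x with hf
  -- per cell data
  have hwIoc : ∀ᵐ x ∂(volume.restrict (Set.Ioc (0:ℝ) 1)), |w x| ≤ M := by
    rwa [Measure.restrict_congr_set Ioo_ae_eq_Ioc] at hwb
  have key : ∀ k, k < N →
      (IntervalIntegrable f volume (t k) (t (k+1)) ∧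
       IntervalIntegrable (fun x => u x ^ 2) volume (t k) (t (k+1)) ∧
       -(M * ∫ x in (t k)..(t (k+1)), u x ^ 2) ≤ ∫ x in (t k)..(t (k+1)), f x) := by
    intro k hk
    have hab : t k < t (k+1) := hmono k hk
    have hIccsub : Set.Icc (t k) (t (k+1)) ⊆ Set.Icc (0:ℝ) 1 :=
      Set.Icc_subset_Icc (h01 k (by omega)).1 (h01 (k+1) (by omega)).2
    have hucab : ContinuousOn u (Set.Icc (t k) (t (k+1))) := huc.mono hIccsub
    have hu2int : IntervalIntegrable (fun x => u x ^ 2) volume (t k) (t (k+1)) :=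
      ((hucab.pow 2).mono (by rw [Set.uIcc_of_le hab.le])).intervalIntegrable
    have huint : IntervalIntegrable u volume (t k) (t (k+1)) :=
      (hucab.mono (by rw [Set.uIcc_of_le hab.le])).intervalIntegrable
    set cw := cellMean t (k+1) w with hcw
    set cu := cellMean t (k+1) u with hcu
    have heq : Set.EqOn f (fun x => cw * cu * u x) (Set.Ioc (t k) (t (k+1))) := by
      intro x hx
      have h1 : t (k+1-1) = t k := by norm_num
      have h2 : x ∈ Set.Ioc (t (k+1-1)) (t (k+1)) := by rwa [h1]
      simp only [hf]
      rw [hcell (k+1) (by omega) (by omega) w x h2, hcell (k+1) (by omega) (by omega) u x h2]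
    have hIntOn : IntegrableOn (fun x => cw * cu * u x) (Set.Ioc (t k) (t (k+1))) volume := by
      apply Integrable.const_mul
      exact (hucab.integrableOn_Icc).mono_set Set.Ioc_subset_Icc_self
    have hfint : IntervalIntegrable f volume (t k) (t (k+1)) := by
      rw [intervalIntegrable_iff_integrableOn_Ioc_of_le hab.le]
      exact hIntOn.congr_fun (fun x hx => (heq hx).symm) measurableSet_Ioc
    -- compute the integral
    have hval : ∫ x in (t k)..(t (k+1)), f x = cw * cu * ∫ x in (t k)..(t (k+1)), u x := by
      rw [intervalIntegral.integral_of_le hab.le, intervalIntegral.integral_of_le hab.le,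
        setIntegral_congr_fun measurableSet_Ioc heq, integral_const_mul]
    -- bound on cw
    have hΔ : 0 < t (k+1) - t k := by linarith
    have hwInt : IntegrableOn w (Set.Ioc (t k) (t (k+1))) volume := by
      have hsub : Set.Ioc (t k) (t (k+1)) ⊆ Set.Ioc (0:ℝ) 1 :=
        Set.Ioc_subset_Ioc (h01 k (by omega)).1 (h01 (k+1) (by omega)).2
      have hb : ∀ᵐ x ∂(volume.restrict (Set.Ioc (t k) (t (k+1)))), ‖w x‖ ≤ M := by
        have := ae_restrict_of_ae_restrict_of_subset hsub hwIoc
        simpa [Real.norm_eq_abs] using this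
      exact Integrable.mono' (integrable_const M) hwm.aestronglyMeasurable.restrict hb
    have hwbd : |∫ x in (t k)..(t (k+1)), w x| ≤ M * (t (k+1) - t k) := by
      rw [intervalIntegral.integral_of_le hab.le]
      have h1 : ‖∫ x in Set.Ioc (t k) (t (k+1)), w x‖ ≤ ∫ x in Set.Ioc (t k) (t (k+1)), M := by
        apply norm_integral_le_of_norm_le (integrable_const M)
        have := ae_restrict_of_ae_restrict_of_subset
          (Set.Ioc_subset_Ioc (h01 k (by omega)).1 (h01 (k+1) (by omega)).2) hwIoc
        simpa [Real.norm_eq_abs] using this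
      rw [setIntegral_const, Real.volume_real_Ioc_of_le hab.le, smul_eq_mul] at h1
      rw [← Real.norm_eq_abs]
      calc ‖∫ x in Set.Ioc (t k) (t (k+1)), w x‖ ≤ (t (k+1) - t k) * M := h1
        _ = M * (t (k+1) - t k) := by ring
    have hcwbd : |cw| ≤ M := by
      rw [hcw]
      unfold cellMean
      have h1 : (k+1) - 1 = k := by omega
      rw [h1, abs_mul, abs_inv]
      rw [abs_of_pos hΔ]
      rw [inv_mul_le_iff₀ hΔ]
      calc |∫ x in (t k)..(t (k+1)), w x| ≤ M * (t (k+1) - t k) := hwbd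
        _ = (t (k+1) - t k) * M := by ring
    -- Cauchy–Schwarz
    set I := ∫ x in (t k)..(t (k+1)), u x with hI
    set Sk := ∫ x in (t k)..(t (k+1)), u x ^ 2 with hSk
    have hCS : I ^ 2 ≤ (t (k+1) - t k) * Sk := cs_interval _ _ hab u hucab
    have hSk0 : 0 ≤ Sk := intervalIntegral.integral_nonneg hab.le (fun x _ => sq_nonneg _)
    have hcuI : cu * I = (t (k+1) - t k)⁻¹ * I ^ 2 := by
      rw [hcu]
      unfold cellMean
      have h1 : (k+1) - 1 = k := by omega
      rw [h1]
      ring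
    have hest : -(M * Sk) ≤ cw * cu * I := by
      have e1 : cw * cu * I = cw * ((t (k+1) - t k)⁻¹ * I ^ 2) := by rw [mul_assoc, hcuI]
      have e2 : 0 ≤ (t (k+1) - t k)⁻¹ * I ^ 2 := by positivity
      have e3 : (t (k+1) - t k)⁻¹ * I ^ 2 ≤ Sk := by
        rw [inv_mul_le_iff₀ hΔ]
        linarith [hCS]
      have e4 : -M ≤ cw := neg_le_of_abs_le hcwbd
      nlinarith [e2, e3, e4, hM]
    refine ⟨hfint, hu2int, ?_⟩
    rw [hval]
    exact hest
  -- sum over cells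
  have hsplitf : ∫ x in (0:ℝ)..1, f x = ∑ k ∈ Finset.range N, ∫ x in (t k)..(t (k+1)), f x := by
    rw [← ht0, ← htN]
    exact (intervalIntegral.sum_integral_adjacent_intervals (fun k hk => (key k hk).1)).symm
  have hsplitu : ∫ x in (0:ℝ)..1, u x ^ 2
      = ∑ k ∈ Finset.range N, ∫ x in (t k)..(t (k+1)), u x ^ 2 := by
    rw [← ht0, ← htN]
    exact (intervalIntegral.sum_integral_adjacent_intervals (fun k hk => (key k hk).2.1)).symm
  rw [ge_iff_le, hsplitf, hsplitu, Finset.mul_sum, ← Finset.sum_neg_distrib]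
  apply Finset.sum_le_sum
  intro k hk
  exact (key k (Finset.mem_range.1 hk)).2.2

theorem coercivity_averaged_bilinear_form
    (N : ℕ) (hN : 1 ≤ N) (t : ℕ → ℝ)
    (ht0 : t 0 = 0) (htN : t N = 1) (hmono : ∀ i < N, t i < t (i + 1))
    (u u' : ℝ → ℝ)
    (hu : ∀ x ∈ Set.Icc (0:ℝ) 1, HasDerivAt u (u' x) x)
    (hu'c : ContinuousOn u' (Set.Icc 0 1))
    (hu0 : u 0 = 0) (hu1 : u 1 = 0)
    (M : ℝ) (hM : 0 ≤ M)
    (w : ℝ → ℝ) (hwm : Measurable w)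
    (hwb : ∀ᵐ x ∂(volume.restrict (Set.Ioo (0:ℝ) 1)), |w x| ≤ M) :
    (∫ x in (0:ℝ)..1, u' x ^ 2) +
      ∫ x in (0:ℝ)..1, locAvg t N w x * locAvg t N u x * u x ≥
      (1 - M / π ^ 2) * ∫ x in (0:ℝ)..1, u' x ^ 2 := by
  have huc : ContinuousOn u (Set.Icc 0 1) :=
    fun x hx => (hu x hx).continuousAt.continuousWithinAt
  have hT := locAvg_term_lower_bound N hN t ht0 htN hmono u huc M hM w hwm hwb
  have hp := poincare u u' hu hu'c hu0 hu1
  set S := ∫ x in (0:ℝ)..1, u x ^ 2 with hS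
  set D := ∫ x in (0:ℝ)..1, u' x ^ 2 with hD
  set T := ∫ x in (0:ℝ)..1, locAvg t N w x * locAvg t N u x * u x with hTdef
  have hπ2 : (0:ℝ) < π ^ 2 := by positivity
  have hS0 : 0 ≤ S :=
    intervalIntegral.integral_nonneg (by norm_num) (fun x _ => sq_nonneg _)
  have key2 : M * S ≤ M / π ^ 2 * D := by
    rw [div_mul_eq_mul_div, le_div_iff₀ hπ2]
    nlinarith [mul_le_mul_of_nonneg_left hp hM]
  have expand : (1 - M / π ^ 2) * D = D - M / π ^ 2 * D := by ring
  rw [ge_iff_le, expand]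
  linarith [hT, key2]
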